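/- If a permutation class contains alternations of every length, then it contains parallel alternations of every length or it contains wedge alternations of every length. -/

import Mathlib

open Filter

/-- A permutation of some finite length `n`. -/
abbrev Permu : Type := Σ n : ℕ, Equiv.Perm (Fin n)

/-- `PLe σ π` : the permutation `σ` is contained in `π` as a pattern. -/
def PLe (σ π : Permu) : Prop :=
  ∃ f : Fin σ.1 → Fin π.1, StrictMono f ∧
    ∀ i j : Fin σ.1, σ.2 i < σ.2 j ↔ π.2 (f i) < π.2 (f j)

/-- A permutation class: a set of permutations closed downward under containment. -/
def IsPermClass (C : Set Permu) : Prop :=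
  ∀ σ π : Permu, PLe σ π → π ∈ C → σ ∈ C

/-- The number of permutations of length `n` in `C`. -/
noncomputable def pcount (C : Set Permu) (n : ℕ) : ℕ :=
  Set.ncard {π ∈ C | π.1 = n}

/-- The upper growth rate of a class, as an extended real. -/
noncomputable def ugr (C : Set Permu) : EReal :=
  limsup (fun n : ℕ => (((pcount C n : ℝ) ^ ((n : ℝ)⁻¹) : ℝ) : EReal)) atTop

/-- The lower growth rate of a class, as an extended real. -/
noncomputable def lgr (C : Set Permu) : EReal :=
  liminf (fun n : ℕ => (((pcount C n : ℝ) ^ ((n : ℝ)⁻¹) : ℝ) : EReal)) atTop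
/-- The group-theoretic inverse of a permutation. -/
def pinv (π : Permu) : Permu := ⟨π.1, π.2⁻¹⟩

/-- A vertical alternation: every entry of odd (1-based) index lies above every entry of
even index, or vice versa. -/
def VertAlt (π : Permu) : Prop :=
  (∀ x y : Fin π.1, Odd ((x : ℕ) + 1) → Even ((y : ℕ) + 1) → π.2 y < π.2 x) ∨
  (∀ x y : Fin π.1, Odd ((x : ℕ) + 1) → Even ((y : ℕ) + 1) → π.2 x < π.2 y)

/-- The subsequence of entries in odd (1-based) positions is increasing. -/
def OddIncr (π : Permu) : Prop :=
  ∀ x y : Fin π.1, Odd ((x : ℕ) + 1) → Odd ((y : ℕ) + 1) → x < y → π.2 x < π.2 y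

/-- The subsequence of entries in odd (1-based) positions is decreasing. -/
def OddDecr (π : Permu) : Prop :=
  ∀ x y : Fin π.1, Odd ((x : ℕ) + 1) → Odd ((y : ℕ) + 1) → x < y → π.2 y < π.2 x

/-- The subsequence of entries in even (1-based) positions is increasing. -/
def EvenIncr (π : Permu) : Prop :=
  ∀ x y : Fin π.1, Even ((x : ℕ) + 1) → Even ((y : ℕ) + 1) → x < y → π.2 x < π.2 y

/-- The subsequence of entries in even (1-based) positions is decreasing. -/
def EvenDecr (π : Permu) : Prop :=
  ∀ x y : Fin π.1, Even ((x : ℕ) + 1) → Even ((y : ℕ) + 1) → x < y → π.2 y < π.2 x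

/-- An alternation: a vertical alternation or a horizontal alternation (a permutation
whose inverse is a vertical alternation). -/
def IsAlternation (π : Permu) : Prop := VertAlt π ∨ VertAlt (pinv π)

/-- A vertical parallel alternation: the odd-position and even-position subsequences are
both increasing or both decreasing. -/
def VertParallel (π : Permu) : Prop :=
  VertAlt π ∧ ((OddIncr π ∧ EvenIncr π) ∨ (OddDecr π ∧ EvenDecr π))

/-- A vertical wedge alternation: one of the two subsequences is increasing and the
other is decreasing. -/
def VertWedge (π : Permu) : Prop :=
  VertAlt π ∧ ((OddIncr π ∧ EvenDecr π) ∨ (OddDecr π ∧ EvenIncr π))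

/-- A parallel alternation (vertical or horizontal). -/
def IsParallelAlt (π : Permu) : Prop := VertParallel π ∨ VertParallel (pinv π)

/-- A wedge alternation (vertical or horizontal). -/
def IsWedgeAlt (π : Permu) : Prop := VertWedge π ∨ VertWedge (pinv π)
/-- If a permutation class contains alternations of every length, then
it contains parallel alternations of every length or wedge alternations of every
length. -/
noncomputable def rankPerm {k n : ℕ} (v : Fin k → Fin n) (hv : Function.Injective v) :
    Equiv.Perm (Fin k) :=
  Equiv.ofBijective
    (fun i => ((Finset.image v Finset.univ).orderIsoOfFin
        (by rw [Finset.card_image_of_injective _ hv, Finset.card_univ, Fintype.card_fin])).symm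
      ⟨v i, by simp⟩)
    ((Finite.injective_iff_bijective).mp (by
      intro i j hij
      apply hv
      simpa [Subtype.ext_iff] using (OrderIso.injective _ hij)))

lemma rankPerm_lt_iff {k n : ℕ} {v : Fin k → Fin n} {hv : Function.Injective v} {i j : Fin k} :
    rankPerm v hv i < rankPerm v hv j ↔ v i < v j := by
  simp only [rankPerm, Equiv.ofBijective_apply]
  rw [OrderIso.lt_iff_lt]
  exact Subtype.mk_lt_mk

noncomputable def pattP (π : Permu) {k : ℕ} (f : Fin k → Fin π.1) (hf : StrictMono f) : Permu :=
  ⟨k, rankPerm (π.2 ∘ f) (π.2.injective.comp hf.injective)⟩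

lemma pattP_lt_iff (π : Permu) {k : ℕ} (f : Fin k → Fin π.1) (hf : StrictMono f)
    {i j : Fin k} : (pattP π f hf).2 i < (pattP π f hf).2 j ↔ π.2 (f i) < π.2 (f j) :=
  rankPerm_lt_iff (hv := π.2.injective.comp hf.injective)

lemma pattP_le (π : Permu) {k : ℕ} (f : Fin k → Fin π.1) (hf : StrictMono f) :
    PLe (pattP π f hf) π :=
  ⟨f, hf, fun _ _ => pattP_lt_iff π f hf⟩


open Classical in
noncomputable def chainSup {α : Type} [LinearOrder α] {m : ℕ} (u : Fin m → α) (i : Fin m) : ℕ :=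
  Finset.sup (Finset.univ.filter (fun s : Finset (Fin m) =>
    i ∈ s ∧ (∀ a ∈ s, a ≤ i) ∧ ∀ a ∈ s, ∀ b ∈ s, a < b → u a < u b)) Finset.card

lemma chainSup_singleton_mem {α : Type} [LinearOrder α] {m : ℕ} (u : Fin m → α) (i : Fin m) :
    ({i} : Finset (Fin m)) ∈ (Finset.univ.filter (fun s : Finset (Fin m) =>
    i ∈ s ∧ (∀ a ∈ s, a ≤ i) ∧ ∀ a ∈ s, ∀ b ∈ s, a < b → u a < u b)) := by
  refine Finset.mem_filter.mpr ⟨Finset.mem_univ _, Finset.mem_singleton_self i,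
    fun a ha => le_of_eq (Finset.mem_singleton.mp ha), fun a ha b hb hab => ?_⟩
  rw [Finset.mem_singleton.mp ha, Finset.mem_singleton.mp hb] at hab
  exact absurd hab (lt_irrefl _)

lemma chainSup_pos {α : Type} [LinearOrder α] {m : ℕ} (u : Fin m → α) (i : Fin m) :
    1 ≤ chainSup u i := by
  have := Finset.le_sup (f := Finset.card) (chainSup_singleton_mem u i)
  simpa [chainSup] using this

lemma chainSup_exists {α : Type} [LinearOrder α] {m : ℕ} (u : Fin m → α) (i : Fin m) :
    ∃ s : Finset (Fin m), (i ∈ s ∧ (∀ a ∈ s, a ≤ i) ∧ ∀ a ∈ s, ∀ b ∈ s, a < b → u a < u b)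
      ∧ s.card = chainSup u i := by
  classical
  obtain ⟨s, hs, hcard⟩ := Finset.exists_mem_eq_sup _ ⟨_, chainSup_singleton_mem u i⟩ Finset.card
  simp only [Finset.mem_filter, Finset.mem_univ, true_and] at hs
  exact ⟨s, hs, by rw [chainSup]; convert hcard.symm using 2⟩

lemma chainSup_lt {α : Type} [LinearOrder α] {m : ℕ} (u : Fin m → α) {i j : Fin m}
    (hij : i < j) (huv : u i < u j) : chainSup u i < chainSup u j := by
  classical
  obtain ⟨s, ⟨his, hle, hch⟩, hcard⟩ := chainSup_exists u i
  have hjs : j ∉ s := fun hj => absurd (hle j hj) (not_le.mpr hij)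
  have hmem : (insert j s) ∈ (Finset.univ.filter (fun s : Finset (Fin m) =>
      j ∈ s ∧ (∀ a ∈ s, a ≤ j) ∧ ∀ a ∈ s, ∀ b ∈ s, a < b → u a < u b)) := by
    refine Finset.mem_filter.mpr ⟨Finset.mem_univ _, Finset.mem_insert_self _ _,
      fun a ha => ?_, fun a ha b hb hab => ?_⟩
    · rcases Finset.mem_insert.mp ha with rfl | ha
      · exact le_refl _
      · exact le_of_lt (lt_of_le_of_lt (hle a ha) hij)
    · rcases Finset.mem_insert.mp ha with ha' | ha'
      · subst ha'
        rcases Finset.mem_insert.mp hb with hb' | hb'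
        · subst hb'; exact absurd hab (lt_irrefl _)
        · exact absurd hab (not_lt.mpr (le_of_lt (lt_of_le_of_lt (hle b hb') hij)))
      · rcases Finset.mem_insert.mp hb with hb' | hb'
        · subst hb'
          rcases eq_or_lt_of_le (hle a ha') with h | h
          · rw [h]; exact huv
          · exact lt_trans (hch a ha' i his h) huv
        · exact hch a ha' b hb' hab
  have := Finset.le_sup (f := Finset.card) hmem
  rw [Finset.card_insert_of_notMem hjs, hcard] at this
  calc chainSup u i < chainSup u i + 1 := Nat.lt_succ_self _
    _ ≤ _ := this.trans_eq (by unfold chainSup; convert rfl)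

lemma chainSup_le {α : Type} [LinearOrder α] {m k : ℕ} (u : Fin m → α)
    (hk : ¬ ∃ g : Fin k → Fin m, StrictMono g ∧ StrictMono (u ∘ g)) (i : Fin m) :
    chainSup u i ≤ k - 1 := by
  classical
  by_contra hlt
  push_neg at hlt
  have hk1 : 1 ≤ k := by
    rcases Nat.eq_zero_or_pos k with rfl | h
    · exact absurd ⟨fun x => x.elim0, fun x => x.elim0, fun x => x.elim0⟩ hk
    · exact h
  have hkle : k ≤ chainSup u i := by omega
  obtain ⟨s, ⟨his, hle, hch⟩, hcard⟩ := chainSup_exists u i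
  obtain ⟨t, hts, htcard⟩ := Finset.exists_subset_card_eq (hcard ▸ hkle)
  apply hk
  refine ⟨fun x => (t.orderIsoOfFin htcard x : Fin m), ?_, ?_⟩
  · intro x y hxy
    exact Subtype.coe_lt_coe.mpr ((t.orderIsoOfFin htcard).strictMono hxy)
  · intro x y hxy
    exact hch _ (hts (t.orderIsoOfFin htcard x).2) _ (hts (t.orderIsoOfFin htcard y).2)
      (Subtype.coe_lt_coe.mpr ((t.orderIsoOfFin htcard).strictMono hxy))

lemma erdos_szekeres {α : Type} [LinearOrder α] {k m : ℕ} (hm : (k-1)*(k-1) + 1 ≤ m)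
    {u : Fin m → α} (hu : Function.Injective u) :
    (∃ g : Fin k → Fin m, StrictMono g ∧ StrictMono (u ∘ g)) ∨
    (∃ g : Fin k → Fin m, StrictMono g ∧ StrictAnti (u ∘ g)) := by
  rcases Nat.eq_zero_or_pos k with rfl | hk1
  · exact Or.inl ⟨fun x => x.elim0, fun x => x.elim0, fun x => x.elim0⟩
  by_contra hcon
  push_neg at hcon
  obtain ⟨hP, hQ⟩ := hcon
  have hPne : ¬ ∃ g : Fin k → Fin m, StrictMono g ∧ StrictMono (u ∘ g) :=
    fun ⟨g, h1, h2⟩ => hP g h1 h2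
  have hQne : ¬ ∃ g : Fin k → Fin m, StrictMono g ∧
      StrictMono ((OrderDual.toDual ∘ u) ∘ g) := by
    rintro ⟨g, h1, h2⟩
    exact hQ g h1 (strictMono_toDual_comp_iff.mp h2)
  set v : Fin m → αᵒᵈ := OrderDual.toDual ∘ u with hv
  have hm1 : 0 < m := by omega
  have hk2 : 2 ≤ k := by
    by_contra hk2
    have h1 := chainSup_le u hPne ⟨0, hm1⟩
    have h2 := chainSup_pos u ⟨0, hm1⟩
    omega
  have hφ : ∀ i : Fin m, chainSup u i - 1 < k - 1 ∧ chainSup v i - 1 < k - 1 := by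
    intro i
    have h1 := chainSup_le u hPne i
    have h2 := chainSup_le v hQne i
    have h3 := chainSup_pos u i
    have h4 := chainSup_pos v i
    omega
  have hcard : Fintype.card (Fin (k-1) × Fin (k-1)) < Fintype.card (Fin m) := by
    simp only [Fintype.card_prod, Fintype.card_fin]
    omega
  obtain ⟨i, j, hne, heq⟩ := Fintype.exists_ne_map_eq_of_card_lt
    (fun i : Fin m => ((⟨chainSup u i - 1, (hφ i).1⟩ : Fin (k-1)),
      (⟨chainSup v i - 1, (hφ i).2⟩ : Fin (k-1)))) hcard
  simp only [Prod.mk.injEq, Fin.mk.injEq] at heq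
  have hA1 := chainSup_pos u i; have hA2 := chainSup_pos u j
  have hD1 := chainSup_pos v i; have hD2 := chainSup_pos v j
  rcases hne.lt_or_gt with hij | hij
  · rcases (hu.ne (Fin.ne_of_lt hij)).lt_or_gt with huv | huv
    · have := chainSup_lt u hij huv; omega
    · have := chainSup_lt v hij (show v i < v j from huv); omega
  · rcases (hu.ne (Fin.ne_of_gt hij)).lt_or_gt with huv | huv
    · have := chainSup_lt v hij (show v j < v i from huv); omega
    · have := chainSup_lt u hij huv; omega

def pairIdx {k : ℕ} (t : Fin (2*k)) : Fin k := ⟨(t:ℕ)/2, by have := t.isLt; omega⟩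

def pairEmb {m k : ℕ} (i : Fin k → Fin m) : Fin (2*k) → Fin (2*m) :=
  fun t => ⟨2 * (i (pairIdx t) : ℕ) + (t:ℕ) % 2, by have := (i (pairIdx t)).isLt; omega⟩

lemma pairEmb_strictMono {m k : ℕ} {i : Fin k → Fin m} (hi : StrictMono i) :
    StrictMono (pairEmb i) := by
  intro s t hst
  have hst' : (s:ℕ) < (t:ℕ) := hst
  show (2 * (i (pairIdx s) : ℕ) + (s:ℕ) % 2) < (2 * (i (pairIdx t) : ℕ) + (t:ℕ) % 2)
  rcases Nat.lt_or_ge ((s:ℕ)/2) ((t:ℕ)/2) with h | h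
  · have : (i (pairIdx s) : ℕ) < (i (pairIdx t) : ℕ) := hi (show pairIdx s < pairIdx t from h)
    omega
  · have he : pairIdx s = pairIdx t := Fin.ext (by show (s:ℕ)/2 = (t:ℕ)/2; omega)
    rw [he]
    omega

lemma extract {m k : ℕ} (ρ : Permu) (hρ : ρ.1 = 2*m)
    (hm : ((k-1)*(k-1)) * ((k-1)*(k-1)) + 1 ≤ m) (hva : VertAlt ρ) :
    ∃ τ : Permu, PLe τ ρ ∧ τ.1 = 2*k ∧ (VertParallel τ ∨ VertWedge τ) := by
  obtain ⟨N, e⟩ := ρ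
  dsimp at hρ hva ⊢
  subst hρ
  set K : ℕ := (k-1)*(k-1)+1 with hK
  -- the odd- and even-position value sequences
  set EA : Fin m → Fin (2*m) := fun t => e ⟨2*(t:ℕ), by have := t.isLt; omega⟩ with hEA
  set EB : Fin m → Fin (2*m) := fun t => e ⟨2*(t:ℕ)+1, by have := t.isLt; omega⟩ with hEB
  have hEAinj : Function.Injective EA := by
    intro s t hst
    have h2 : 2 * (s:ℕ) = 2 * (t:ℕ) := congrArg Fin.val (e.injective hst)
    exact Fin.ext (by omega)
  have hEBinj : Function.Injective EB := by
    intro s t hst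
    have h2 : 2 * (s:ℕ) + 1 = 2 * (t:ℕ) + 1 := congrArg Fin.val (e.injective hst)
    exact Fin.ext (by omega)
  obtain ⟨g₁, hg₁, hg₁m⟩ :
      (∃ g : Fin K → Fin m, StrictMono g ∧ (StrictMono (EA ∘ g) ∨ StrictAnti (EA ∘ g))) := by
    rcases erdos_szekeres (k := K) (by
        have hK1 : K - 1 = (k-1)*(k-1) := by simp [hK]
        rw [hK1]
        exact hm)
        hEAinj with ⟨g, h1, h2⟩ | ⟨g, h1, h2⟩
    · exact ⟨g, h1, Or.inl h2⟩
    · exact ⟨g, h1, Or.inr h2⟩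
  obtain ⟨g₂, hg₂, hg₂m⟩ :
      (∃ g : Fin k → Fin K, StrictMono g ∧
        (StrictMono ((EB ∘ g₁) ∘ g) ∨ StrictAnti ((EB ∘ g₁) ∘ g))) := by
    rcases erdos_szekeres (k := k) (by omega) (hEBinj.comp hg₁.injective)
        with ⟨g, h1, h2⟩ | ⟨g, h1, h2⟩
    · exact ⟨g, h1, Or.inl h2⟩
    · exact ⟨g, h1, Or.inr h2⟩
  set i : Fin k → Fin m := g₁ ∘ g₂ with hi
  have him : StrictMono i := hg₁.comp hg₂
  have hA : StrictMono (EA ∘ i) ∨ StrictAnti (EA ∘ i) := by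
    rcases hg₁m with h | h
    · exact Or.inl (h.comp hg₂)
    · exact Or.inr (h.comp_strictMono hg₂)
  have hB : StrictMono (EB ∘ i) ∨ StrictAnti (EB ∘ i) := hg₂m
  set π : Permu := ⟨2*m, e⟩ with hπ
  have hf : StrictMono (pairEmb i : Fin (2*k) → Fin π.1) := pairEmb_strictMono him
  set τ : Permu := pattP π (pairEmb i) hf with hτ
  refine ⟨τ, pattP_le π _ hf, rfl, ?_⟩
  -- parity facts
  have hpar : ∀ x : Fin (2*k), ((pairEmb i x : ℕ)) % 2 = (x : ℕ) % 2 := by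
    intro x
    show (2 * (i (pairIdx x) : ℕ) + (x:ℕ) % 2) % 2 = (x:ℕ) % 2
    omega
  -- VertAlt τ
  have hvaτ : VertAlt τ := by
    have key : ∀ x : Fin (2*k), (Odd ((x:ℕ)+1) → Odd ((pairEmb i x : ℕ)+1)) ∧
        (Even ((x:ℕ)+1) → Even ((pairEmb i x : ℕ)+1)) := by
      intro x
      have := hpar x
      constructor <;> simp only [Nat.odd_iff, Nat.even_iff] <;> omega
    rcases hva with h | h
    · left; intro x y hx hy
      refine (pattP_lt_iff π (pairEmb i) hf).mpr ?_
      exact h _ _ ((key x).1 hx) ((key y).2 hy)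
    · right; intro x y hx hy
      refine (pattP_lt_iff π (pairEmb i) hf).mpr ?_
      exact h _ _ ((key x).1 hx) ((key y).2 hy)
  -- rewriting values at odd/even positions
  have hfodd : ∀ x : Fin (2*k), (x:ℕ) % 2 = 0 → e (pairEmb i x) = (EA ∘ i) (pairIdx x) := by
    intro x hx
    apply congrArg
    exact Fin.ext (by show (2 * (i (pairIdx x) : ℕ) + (x:ℕ) % 2) = 2*(i (pairIdx x) : ℕ); omega)
  have hfeven : ∀ x : Fin (2*k), (x:ℕ) % 2 = 1 → e (pairEmb i x) = (EB ∘ i) (pairIdx x) := by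
    intro x hx
    apply congrArg
    exact Fin.ext (by show (2 * (i (pairIdx x) : ℕ) + (x:ℕ) % 2) = 2*(i (pairIdx x) : ℕ)+1; omega)
  have hOI : StrictMono (EA ∘ i) → OddIncr τ := by
    intro hm x y hx hy hxy
    rw [Nat.odd_iff] at hx hy
    have hx0 : (x:ℕ) % 2 = 0 := by omega
    have hy0 : (y:ℕ) % 2 = 0 := by omega
    refine (pattP_lt_iff π (pairEmb i) hf).mpr ?_
    show e (pairEmb i x) < e (pairEmb i y)
    rw [hfodd x hx0, hfodd y hy0]
    exact hm (show pairIdx x < pairIdx y by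
      show (x:ℕ)/2 < (y:ℕ)/2
      have : (x:ℕ) < (y:ℕ) := hxy
      omega)
  have hOD : StrictAnti (EA ∘ i) → OddDecr τ := by
    intro hm x y hx hy hxy
    rw [Nat.odd_iff] at hx hy
    have hx0 : (x:ℕ) % 2 = 0 := by omega
    have hy0 : (y:ℕ) % 2 = 0 := by omega
    refine (pattP_lt_iff π (pairEmb i) hf).mpr ?_
    show e (pairEmb i y) < e (pairEmb i x)
    rw [hfodd x hx0, hfodd y hy0]
    exact hm (show pairIdx x < pairIdx y by
      show (x:ℕ)/2 < (y:ℕ)/2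
      have : (x:ℕ) < (y:ℕ) := hxy
      omega)
  have hEI : StrictMono (EB ∘ i) → EvenIncr τ := by
    intro hm x y hx hy hxy
    rw [Nat.even_iff] at hx hy
    have hx0 : (x:ℕ) % 2 = 1 := by omega
    have hy0 : (y:ℕ) % 2 = 1 := by omega
    refine (pattP_lt_iff π (pairEmb i) hf).mpr ?_
    show e (pairEmb i x) < e (pairEmb i y)
    rw [hfeven x hx0, hfeven y hy0]
    exact hm (show pairIdx x < pairIdx y by
      show (x:ℕ)/2 < (y:ℕ)/2
      have : (x:ℕ) < (y:ℕ) := hxy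
      omega)
  have hED : StrictAnti (EB ∘ i) → EvenDecr τ := by
    intro hm x y hx hy hxy
    rw [Nat.even_iff] at hx hy
    have hx0 : (x:ℕ) % 2 = 1 := by omega
    have hy0 : (y:ℕ) % 2 = 1 := by omega
    refine (pattP_lt_iff π (pairEmb i) hf).mpr ?_
    show e (pairEmb i y) < e (pairEmb i x)
    rw [hfeven x hx0, hfeven y hy0]
    exact hm (show pairIdx x < pairIdx y by
      show (x:ℕ)/2 < (y:ℕ)/2
      have : (x:ℕ) < (y:ℕ) := hxy
      omega)
  rcases hA with hA | hA <;> rcases hB with hB | hB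
  · exact Or.inl ⟨hvaτ, Or.inl ⟨hOI hA, hEI hB⟩⟩
  · exact Or.inr ⟨hvaτ, Or.inl ⟨hOI hA, hED hB⟩⟩
  · exact Or.inr ⟨hvaτ, Or.inr ⟨hOD hA, hEI hB⟩⟩
  · exact Or.inl ⟨hvaτ, Or.inr ⟨hOD hA, hED hB⟩⟩

lemma pinv_pinv (π : Permu) : pinv (pinv π) = π := by
  cases π; exact congrArg (Sigma.mk _) (inv_inv _)

lemma PLe_inv {σ π : Permu} (h : PLe σ π) : PLe (pinv σ) (pinv π) := by
  obtain ⟨f, hf, hord⟩ := h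
  refine ⟨fun i => π.2 (f (σ.2⁻¹ i)), ?_, ?_⟩
  · intro i j hij
    refine (hord _ _).mp ?_
    exact lt_of_eq_of_lt (Equiv.apply_symm_apply σ.2 i) (lt_of_lt_of_eq hij (Equiv.apply_symm_apply σ.2 j).symm)
  · intro i j
    show σ.2⁻¹ i < σ.2⁻¹ j ↔ π.2⁻¹ (π.2 (f (σ.2⁻¹ i))) < π.2⁻¹ (π.2 (f (σ.2⁻¹ j)))
    simp [hf.lt_iff_lt]

lemma vertAlt_pattP {π : Permu} {k : ℕ} {f : Fin k → Fin π.1} (hf : StrictMono f)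
    (hpar : ∀ x : Fin k, ((f x : ℕ)) % 2 = (x : ℕ) % 2)
    (h : VertAlt π) : VertAlt (pattP π f hf) := by
  have key : ∀ x : Fin k, (Odd ((x:ℕ)+1) ↔ Odd ((f x : ℕ)+1)) ∧
      (Even ((x:ℕ)+1) ↔ Even ((f x : ℕ)+1)) := by
    intro x
    have := hpar x
    constructor <;> simp only [Nat.odd_iff, Nat.even_iff] <;> omega
  rcases h with h | h
  · left; intro x y hx hy
    refine (pattP_lt_iff π f hf).mpr ?_
    exact h _ _ (((key x).1).mp hx) (((key y).2).mp hy)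
  · right; intro x y hx hy
    refine (pattP_lt_iff π f hf).mpr ?_
    exact h _ _ (((key x).1).mp hx) (((key y).2).mp hy)

lemma mono_pattP {π : Permu} {k : ℕ} {f : Fin k → Fin π.1} (hf : StrictMono f)
    (hpar : ∀ x : Fin k, ((f x : ℕ)) % 2 = (x : ℕ) % 2) :
    (OddIncr π → OddIncr (pattP π f hf)) ∧ (OddDecr π → OddDecr (pattP π f hf)) ∧
    (EvenIncr π → EvenIncr (pattP π f hf)) ∧ (EvenDecr π → EvenDecr (pattP π f hf)) := by
  have key : ∀ x : Fin k, (Odd ((x:ℕ)+1) → Odd ((f x : ℕ)+1)) ∧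
      (Even ((x:ℕ)+1) → Even ((f x : ℕ)+1)) := by
    intro x
    have := hpar x
    constructor <;> simp only [Nat.odd_iff, Nat.even_iff] <;> omega
  refine ⟨?_, ?_, ?_, ?_⟩ <;> intro h x y hx hy hxy <;> refine (pattP_lt_iff π f hf).mpr ?_ <;>
    first
    | exact h _ _ ((key _).1 hx) ((key _).1 hy) (hf hxy)
    | exact h _ _ ((key _).2 hx) ((key _).2 hy) (hf hxy)

lemma prefix_patt {σ : Permu} {n : ℕ} (h : n ≤ σ.1) :
    ∃ τ : Permu, PLe τ σ ∧ τ.1 = n ∧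
      (VertParallel σ → VertParallel τ) ∧ (VertWedge σ → VertWedge τ) := by
  have hpar : ∀ x : Fin n, (((Fin.castLE h) x : ℕ)) % 2 = (x : ℕ) % 2 := fun x => rfl
  refine ⟨pattP σ (Fin.castLE h) (Fin.strictMono_castLE h),
    pattP_le σ _ (Fin.strictMono_castLE h), rfl, ?_, ?_⟩
  · rintro ⟨h1, h2⟩
    obtain ⟨a, b, c, d⟩ := mono_pattP (Fin.strictMono_castLE h) hpar
    exact ⟨vertAlt_pattP _ hpar h1, h2.imp (fun ⟨u, v⟩ => ⟨a u, c v⟩) (fun ⟨u, v⟩ => ⟨b u, d v⟩)⟩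
  · rintro ⟨h1, h2⟩
    obtain ⟨a, b, c, d⟩ := mono_pattP (Fin.strictMono_castLE h) hpar
    exact ⟨vertAlt_pattP _ hpar h1, h2.imp (fun ⟨u, v⟩ => ⟨a u, d v⟩) (fun ⟨u, v⟩ => ⟨b u, c v⟩)⟩

lemma shrink {C : Set Permu} (hC : IsPermClass C) {π : Permu} (hπ : π ∈ C) {n : ℕ}
    (hn : n ≤ π.1) :
    (IsParallelAlt π → ∃ τ ∈ C, τ.1 = n ∧ IsParallelAlt τ) ∧
    (IsWedgeAlt π → ∃ τ ∈ C, τ.1 = n ∧ IsWedgeAlt τ) := by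
  constructor
  · rintro (hp | hp)
    · obtain ⟨τ, hle, hτn, hP, _⟩ := prefix_patt hn
      exact ⟨τ, hC _ _ hle hπ, hτn, Or.inl (hP hp)⟩
    · obtain ⟨τ, hle, hτn, hP, _⟩ := prefix_patt (σ := pinv π) hn
      have hle' : PLe (pinv τ) π := by
        have := PLe_inv hle; rwa [pinv_pinv] at this
      exact ⟨pinv τ, hC _ _ hle' hπ, hτn, Or.inr (by rw [pinv_pinv]; exact hP hp)⟩
  · rintro (hp | hp)
    · obtain ⟨τ, hle, hτn, _, hW⟩ := prefix_patt hn
      exact ⟨τ, hC _ _ hle hπ, hτn, Or.inl (hW hp)⟩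
    · obtain ⟨τ, hle, hτn, _, hW⟩ := prefix_patt (σ := pinv π) hn
      have hle' : PLe (pinv τ) π := by
        have := PLe_inv hle; rwa [pinv_pinv] at this
      exact ⟨pinv τ, hC _ _ hle' hπ, hτn, Or.inr (by rw [pinv_pinv]; exact hW hp)⟩

theorem alternations_give_parallel_or_wedge
    (C : Set Permu) (hC : IsPermClass C)
    (h : ∀ n : ℕ, ∃ π ∈ C, π.1 = n ∧ IsAlternation π) :
    (∀ n : ℕ, ∃ π ∈ C, π.1 = n ∧ IsParallelAlt π) ∨
    (∀ n : ℕ, ∃ π ∈ C, π.1 = n ∧ IsWedgeAlt π) := by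
  by_contra hcon
  push_neg at hcon
  obtain ⟨⟨n, hn⟩, ⟨p, hp⟩⟩ := hcon
  set k : ℕ := max (max n p) 1 with hk
  have hkn : n ≤ k := le_trans (le_max_left n p) (le_max_left _ 1)
  have hkp : p ≤ k := le_trans (le_max_right n p) (le_max_left _ 1)
  set m : ℕ := ((k-1)*(k-1)) * ((k-1)*(k-1)) + 1 with hmdef
  obtain ⟨π, hπC, hπlen, hπalt⟩ := h (2*m)
  have hmm : ((k-1)*(k-1)) * ((k-1)*(k-1)) + 1 ≤ m := le_refl _
  have final : ∀ τ : Permu, τ ∈ C → τ.1 = 2*k → (IsParallelAlt τ ∨ IsWedgeAlt τ) → False := by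
    intro τ hτC hτlen hτpw
    rcases hτpw with hP | hW
    · obtain ⟨σ, hσC, hσn, hσP⟩ :=
        (shrink hC hτC (n := n) (by rw [hτlen]; omega)).1 hP
      exact hn σ hσC hσn hσP
    · obtain ⟨σ, hσC, hσn, hσW⟩ :=
        (shrink hC hτC (n := p) (by rw [hτlen]; omega)).2 hW
      exact hp σ hσC hσn hσW
  rcases hπalt with hva | hva
  · obtain ⟨τ, hle, hτ, hpw⟩ := extract π hπlen hmm hva
    exact final τ (hC _ _ hle hπC) hτ
      (hpw.imp (fun hx => Or.inl hx) (fun hx => Or.inl hx))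
  · obtain ⟨τ, hle, hτ, hpw⟩ := extract (pinv π) hπlen hmm hva
    have hle' : PLe (pinv τ) π := by
      have := PLe_inv hle; rwa [pinv_pinv] at this
    exact final (pinv τ) (hC _ _ hle' hπC) hτ
      (hpw.imp (fun hx => Or.inr (by rw [pinv_pinv]; exact hx))
        (fun hx => Or.inr (by rw [pinv_pinv]; exact hx)))
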